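/- Let (B,Λ) and (C,Π) be Poisson k-algebras over a field k of characteristic 0, and let f:(C,Π)→(B,Λ) be a Poisson algebra homomorphism (i.e. f(Π(a,b)) = Λ(f(a),f(b)) for all a,b ∈ C). Define π on Q ∈ Hom_C(∧^q Ω_{C/k}, B) by π(Q)(a_1,…,a_{q+1}) = Σ_{σ∈S_{q,1}} sgn(σ) Λ(Q(a_{σ(1)},…,a_{σ(q)}), f(a_{σ(q+1)})) − (−1)^{q−1} Σ_{σ∈S_{2,q−1}} sgn(σ) Q(Π(a_{σ(1)},a_{σ(2)}), a_{σ(3)},…,a_{σ(q+1)}). Then π∘π = 0, i.e. the sequence Hom_C(Ω_{C/k},B) → Hom_C(∧²Ω_{C/k},B) → Hom_C(∧³Ω_{C/k},B) → ⋯ is a complex. -/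

import Mathlib

set_option linter.unusedSectionVars false

namespace PoissonCE

variable {B C : Type*} [CommRing B] [AddCommGroup C]

/-- structural data for a CE-type differential -/
structure CES (β : C → C → C) (ρ : C → B → B) : Prop where
  rho_add : ∀ a m m', ρ a (m + m') = ρ a m + ρ a m'
  act : ∀ a b m, ρ (β a b) m = ρ a (ρ b m) - ρ b (ρ a m)
  bl : ∀ a a' b, β (a + a') b = β a b + β a' b
  brr : ∀ a b b', β a (b + b') = β a b + β a b'
  ba : ∀ a b, β a b = - β b a
  bj : ∀ a b c, β a (β b c) + β b (β c a) + β c (β a b) = 0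

variable {β : C → C → C} {ρ : C → B → B}

section Ops
variable (β ρ)

def contr {q : ℕ} (a : C) (Q : (Fin (q+1) → C) → B) : (Fin q → C) → B :=
  fun y => Q (Fin.cons a y)

def lie {q : ℕ} (a : C) (Q : (Fin q → C) → B) : (Fin q → C) → B :=
  fun y => ρ a (Q y) - ∑ i, Q (Function.update y i (β a (y i)))

def dAct {q : ℕ} (Q : (Fin q → C) → B) : (Fin (q+1) → C) → B :=
  fun y => ∑ i : Fin (q+1), (-1:B)^(i:ℕ) * ρ (y i) (Q (y ∘ i.succAbove))

def dBr {q : ℕ} (Q : (Fin (q+1) → C) → B) : (Fin (q+2) → C) → B :=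
  fun y => ∑ p ∈ Finset.univ.filter (fun p : Fin (q+2) × Fin (q+1) => (p.1:ℕ) ≤ (p.2:ℕ)),
    (-1:B)^((p.1:ℕ)+(p.2:ℕ)+1) *
      Q (Fin.cons (β (y p.1) (y (p.2.succ))) (y ∘ p.1.succAbove ∘ p.2.succAbove))

def dd : ∀ {q : ℕ}, ((Fin q → C) → B) → (Fin (q+1) → C) → B
  | 0, Q => dAct ρ Q
  | _+1, Q => fun y => dAct ρ Q y + dBr β Q y

end Ops

@[simp] lemma dd_zero (Q : (Fin 0 → C) → B) : dd β ρ Q = dAct ρ Q := rfl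
@[simp] lemma dd_succ {q : ℕ} (Q : (Fin (q+1) → C) → B) (y : Fin (q+2) → C) :
    dd β ρ Q y = dAct ρ Q y + dBr β Q y := rfl

/-- additivity in each slot -/
def AddC {q : ℕ} (Q : (Fin q → C) → B) : Prop :=
  ∀ (y : Fin q → C) (i : Fin q) (a b : C),
    Q (Function.update y i (a+b)) = Q (Function.update y i a) + Q (Function.update y i b)

/-- alternating: precomposition with a transposition negates -/
def SwapNeg {q : ℕ} (Q : (Fin q → C) → B) : Prop :=
  ∀ (y : Fin q → C) (i j : Fin q), i ≠ j → Q (y ∘ (Equiv.swap i j)) = - Q y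





-- sign helpers
lemma npow_flip (a : ℕ) : (-1:B)^(a+1) = -(-1:B)^a := by rw [pow_succ]; ring

lemma npow_congr {a b : ℕ} (h : a % 2 = b % 2) : (-1:B)^a = (-1:B)^b := by
  rcases Nat.even_or_odd a with ha | ha
  · have hb : Even b := by rcases ha with ⟨k,hk⟩; exact (Nat.even_iff).2 (by omega)
    rw [ha.neg_one_pow, hb.neg_one_pow]
  · have hb : Odd b := by rcases ha with ⟨k,hk⟩; exact (Nat.odd_iff).2 (by omega)
    rw [ha.neg_one_pow, hb.neg_one_pow]

lemma npow_self_mul (a : ℕ) : (-1:B)^a * (-1:B)^a = 1 := by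
  rw [← pow_add]; exact Even.neg_one_pow ⟨a, rfl⟩
lemma npow_sub {a b : ℕ} (h : b ≤ a) : (-1:B)^(a-b) = (-1:B)^(a+b) := by
  apply npow_congr; omega


lemma valsa {n : ℕ} (p : Fin (n+1)) (i : Fin n) :
    (p.succAbove i : ℕ) = if (i:ℕ) < (p:ℕ) then (i:ℕ) else (i:ℕ)+1 := by
  by_cases h : (i:ℕ) < (p:ℕ)
  · rw [if_pos h, Fin.succAbove_of_castSucc_lt _ _ (by simpa [Fin.lt_def] using h)]; simp
  · rw [if_neg h, Fin.succAbove_of_le_castSucc _ _ (by simp [Fin.le_def]; omega)]; simp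

-- rho helpers
variable (h : CES β ρ)
include h

lemma rho_zero (a : C) : ρ a (0:B) = 0 := by
  have := h.rho_add a 0 0; simp at this; exact this

lemma rho_neg (a : C) (m : B) : ρ a (-m) = - ρ a m := by
  have := h.rho_add a m (-m); simp [rho_zero h] at this
  linear_combination -this

lemma rho_sub (a : C) (m m' : B) : ρ a (m - m') = ρ a m - ρ a m' := by
  rw [sub_eq_add_neg, h.rho_add, rho_neg h]; ring

lemma rho_sum {ι : Type*} (a : C) (s : Finset ι) (f : ι → B) :
    ρ a (∑ i ∈ s, f i) = ∑ i ∈ s, ρ a (f i) :=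
  map_sum (AddMonoidHom.mk' (ρ a) (h.rho_add a)) f s

lemma rho_sign (a : C) (k : ℕ) (m : B) : ρ a ((-1:B)^k * m) = (-1:B)^k * ρ a m := by
  rcases Nat.even_or_odd k with hk | hk
  · rw [hk.neg_one_pow]; simp
  · rw [hk.neg_one_pow]; simp [rho_neg h]

lemma beta_zero_left (b : C) : β 0 b = 0 := by
  have := h.bl 0 0 b; simp at this; exact this

lemma beta_neg_right (a b : C) : β a (-b) = - β a b := by
  have h0 : β a (0:C) = 0 := by rw [h.ba, beta_zero_left h, neg_zero]
  have := h.brr a b (-b); simp [h0] at this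
  exact (neg_eq_of_add_eq_zero_right this.symm).symm
omit h

open Function Fin Equiv

variable {q : ℕ}

-- AddC consequences
lemma AddC.upd_zero {Q : (Fin q → C) → B} (hA : AddC Q) (y : Fin q → C) (i : Fin q) :
    Q (update y i 0) = 0 := by
  have := hA y i 0 0; simp at this; exact this

lemma AddC.upd_neg {Q : (Fin q → C) → B} (hA : AddC Q) (y : Fin q → C) (i : Fin q) (a : C) :
    Q (update y i (-a)) = - Q (update y i a) := by
  have := hA y i a (-a); simp [hA.upd_zero] at this
  linear_combination -this

lemma consz (w : Fin q → C) (c : C) : Fin.cons c w = update (Fin.cons (0:C) w : Fin (q+1) → C) 0 c := by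
  funext t
  refine Fin.cases ?_ (fun t => ?_) t
  · simp
  · simp [Fin.cons_succ, Function.update_of_ne (Fin.succ_ne_zero t)]

lemma AddC.cons_add {Q : (Fin (q+1) → C) → B} (hA : AddC Q) (u v : C) (w : Fin q → C) :
    Q (Fin.cons (u+v) w) = Q (Fin.cons u w) + Q (Fin.cons v w) := by
  rw [consz w (u+v), consz w u, consz w v]; exact hA _ 0 u v

lemma AddC.cons_zero {Q : (Fin (q+1) → C) → B} (hA : AddC Q) (w : Fin q → C) :
    Q (Fin.cons 0 w) = 0 := by rw [consz w 0]; exact hA.upd_zero _ _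

lemma AddC.cons_neg {Q : (Fin (q+1) → C) → B} (hA : AddC Q) (u : C) (w : Fin q → C) :
    Q (Fin.cons (-u) w) = - Q (Fin.cons u w) := by
  rw [consz w (-u), consz w u]; exact hA.upd_neg _ _ _

-- Fin identities
lemma sa_zero (i : Fin (q+1)) : (i.succ).succAbove 0 = 0 := by
  ext; rw [valsa]; simp

lemma sa_succ (i : Fin (q+1)) (t : Fin q) : (i.succ).succAbove t.succ = (i.succAbove t).succ := by
  ext; simp only [valsa, Fin.val_succ]; split_ifs <;> omega

lemma cons_comp_succ (a : C) (y : Fin q → C) : (Fin.cons a y) ∘ Fin.succ = y := by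
  funext t; simp

lemma comp_tail (y : Fin (q+1) → C) : y ∘ Fin.succ = Fin.tail y := rfl

lemma cons_comp_succAbove_zero (a : C) (y : Fin (q+1) → C) :
    (Fin.cons a y) ∘ (0 : Fin (q+2)).succAbove = y := by
  rw [Fin.succAbove_zero]; exact cons_comp_succ a y

lemma cons_comp_succAbove_succ (a : C) (y : Fin (q+1) → C) (i : Fin (q+1)) :
    (Fin.cons a y) ∘ (i.succ).succAbove = Fin.cons a (y ∘ i.succAbove) := by
  funext p
  refine Fin.cases ?_ (fun t => ?_) p
  · simp [sa_zero]
  · simp [sa_succ, Fin.cons_succ]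

lemma succAbove_comp_cons (y : Fin (q+2) → C) (k : Fin (q+1)) :
    y ∘ (k.succ).succAbove = Fin.cons (y 0) ((y ∘ Fin.succ) ∘ k.succAbove) := by
  funext p
  refine Fin.cases ?_ (fun t => ?_) p
  · simp [sa_zero]
  · simp [sa_succ, Fin.cons_succ]

lemma cons_update_succ (y : Fin (q+1) → C) (k : Fin q) (c : C) :
    Fin.cons (y 0) (update (y ∘ Fin.succ) k c) = update y k.succ c := by
  rw [comp_tail, Fin.cons_update, Fin.cons_self_tail]

lemma cons_comp_swap (a : C) (y : Fin q → C) (i j : Fin q) :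
    (Fin.cons a y) ∘ (Equiv.swap i.succ j.succ) = Fin.cons a (y ∘ (Equiv.swap i j)) := by
  funext p
  refine Fin.cases ?_ (fun t => ?_) p
  · rw [Function.comp_apply,
      Equiv.swap_apply_of_ne_of_ne (Ne.symm (Fin.succ_ne_zero i)) (Ne.symm (Fin.succ_ne_zero j))]
    simp
  · rcases eq_or_ne t i with rfl | hti
    · simp [Equiv.swap_apply_left, Fin.cons_succ]
    · rcases eq_or_ne t j with rfl | htj
      · simp [Equiv.swap_apply_right, Fin.cons_succ]
      · rw [Function.comp_apply,
          Equiv.swap_apply_of_ne_of_ne (fun hh => hti (Fin.succ_injective _ hh))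
            (fun hh => htj (Fin.succ_injective _ hh))]
        simp [Fin.cons_succ, Equiv.swap_apply_of_ne_of_ne hti htj]

lemma update_comp_swap (y : Fin q → C) (s : Equiv.Perm (Fin q)) (hs : ∀ t, s (s t) = t)
    (i : Fin q) (v : C) :
    update (y ∘ s) (s i) v = (update y i v) ∘ s := by
  funext t
  rw [Function.comp_apply, Function.update_apply, Function.update_apply]
  by_cases ht : t = s i
  · rw [if_pos ht, if_pos (by rw [ht, hs])]
  · rw [if_neg ht, if_neg (fun hh => ht (by rw [← hh, hs]))]; rfl

lemma comp_swap_eq_update (y : Fin q → C) (i j : Fin q) :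
    y ∘ (Equiv.swap i j) = update (update y i (y j)) j (y i) := by
  funext t
  rw [Function.comp_apply, Equiv.swap_apply_def, Function.update_apply, Function.update_apply]
  split_ifs <;> simp_all

lemma swapNeg_of_alt {Q : (Fin q → C) → B} (hA : AddC Q)
    (hAlt : ∀ y (i j : Fin q), i ≠ j → y i = y j → Q y = 0) : SwapNeg Q := by
  intro y i j hij
  rw [comp_swap_eq_update]
  have hval : ∀ c d : C, (update (update y i c) j d) i = c := fun c d => by
    rw [Function.update_of_ne hij, Function.update_self]
  have hzero : ∀ c : C, Q (update (update y i c) j c) = 0 := fun c =>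
    hAlt _ i j hij (by rw [hval, Function.update_self])
  have e1 : Q (update (update y i (y i + y j)) j (y i + y j)) = 0 := hzero _
  have e2 : Q (update (update y i (y i + y j)) j (y i + y j))
      = Q (update (update y i (y i)) j (y i + y j)) + Q (update (update y i (y j)) j (y i + y j)) := by
    rw [Function.update_comm hij, Function.update_comm hij (y i) _ y,
      Function.update_comm hij (y j) _ y]
    exact hA _ i _ _
  have e3 : Q (update (update y i (y i)) j (y i + y j))
      = Q (update (update y i (y i)) j (y i)) + Q (update (update y i (y i)) j (y j)) := hA _ j _ _
  have e4 : Q (update (update y i (y j)) j (y i + y j))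
      = Q (update (update y i (y j)) j (y i)) + Q (update (update y i (y j)) j (y j)) := hA _ j _ _
  have e5 : Q (update (update y i (y i)) j (y j)) = Q y := by
    rw [Function.update_eq_self, Function.update_eq_self]
  have e6 : Q (update (update y i (y i)) j (y i)) = 0 := hzero _
  have e7 : Q (update (update y i (y j)) j (y j)) = 0 := hzero _
  rw [e2, e3, e4, e5, e6, e7] at e1
  linear_combination e1

lemma contr_addC {Q : (Fin (q+1) → C) → B} (hA : AddC Q) (a : C) : AddC (contr a Q) := by
  intro y i u v
  simp only [contr]
  rw [Fin.cons_update, Fin.cons_update, Fin.cons_update]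
  exact hA _ i.succ u v

lemma contr_swapNeg {Q : (Fin (q+1) → C) → B} (hS : SwapNeg Q) (a : C) : SwapNeg (contr a Q) := by
  intro y i j hij
  simp only [contr]
  rw [← cons_comp_swap]
  exact hS _ i.succ j.succ (fun hh => hij (Fin.succ_injective _ hh))

lemma lie_swapNeg (h : CES β ρ) {Q : (Fin q → C) → B} (hS : SwapNeg Q) (b : C) :
    SwapNeg (lie β ρ b Q) := by
  intro y i j hij
  simp only [lie]
  have hs2 : ∀ t, Equiv.swap i j (Equiv.swap i j t) = t := fun t => Equiv.swap_apply_self i j t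
  have e1 : ρ b (Q (y ∘ Equiv.swap i j)) = - ρ b (Q y) := by rw [hS y i j hij, rho_neg h]
  have e2 : ∑ t : Fin q, Q (update (y ∘ Equiv.swap i j) t (β b ((y ∘ Equiv.swap i j) t)))
      = - ∑ t : Fin q, Q (update y t (β b (y t))) := by
    rw [← Equiv.sum_comp (Equiv.swap i j)
      (fun t => Q (update (y ∘ Equiv.swap i j) t (β b ((y ∘ Equiv.swap i j) t))))]
    rw [← Finset.sum_neg_distrib]
    apply Finset.sum_congr rfl
    intro t _
    have hv : (y ∘ Equiv.swap i j) (Equiv.swap i j t) = y t := by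
      rw [Function.comp_apply, hs2]
    rw [hv, update_comp_swap y (Equiv.swap i j) hs2 t (β b (y t))]
    exact hS _ i j hij
  rw [e1, e2]; ring

lemma swapNeg_of_adj {m : ℕ} {T : (Fin m → C) → B}
    (hadj : ∀ (y : Fin m → C) (i j : Fin m), (j:ℕ) = (i:ℕ)+1 → T (y ∘ Equiv.swap i j) = - T y) :
    SwapNeg T := by
  suffices H : ∀ (d : ℕ) (y : Fin m → C) (i j : Fin m), (i:ℕ) < (j:ℕ) → (j:ℕ) - (i:ℕ) = d →
      T (y ∘ Equiv.swap i j) = - T y by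
    intro y i j hij
    rcases lt_or_gt_of_ne (show (i:ℕ) ≠ (j:ℕ) from fun hh => hij (Fin.ext hh)) with hlt | hgt
    · exact H _ y i j hlt rfl
    · rw [Equiv.swap_comm]; exact H _ y j i hgt rfl
  intro d
  induction d using Nat.strong_induction_on with
  | _ d IH =>
    intro y i j hlt hd
    rcases eq_or_lt_of_le (show (i:ℕ)+1 ≤ (j:ℕ) from hlt) with he | hgt
    · exact hadj y i j he.symm
    · set k : Fin m := ⟨(j:ℕ)-1, by omega⟩ with hk
      have hik : (i:ℕ) < (k:ℕ) := by simp [hk]; omega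
      have hkj : (j:ℕ) = (k:ℕ)+1 := by simp [hk]; omega
      have hki : i ≠ k := fun hh => by rw [hh] at hik; omega
      have hkij : i ≠ j := fun hh => by rw [hh] at hlt; omega
      have hdecomp : (Equiv.swap i j : Equiv.Perm (Fin m))
          = Equiv.swap k j * Equiv.swap i k * Equiv.swap k j := by
        have h1 : Equiv.swap k j i = i :=
          Equiv.swap_apply_of_ne_of_ne hki hkij
        have h2 : Equiv.swap k j k = j := Equiv.swap_apply_left _ _
        calc Equiv.swap i j = Equiv.swap (Equiv.swap k j i) (Equiv.swap k j k) := by rw [h1, h2]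
        _ = Equiv.swap k j * Equiv.swap i k * (Equiv.swap k j)⁻¹ :=
            Equiv.swap_apply_apply _ _ _
        _ = Equiv.swap k j * Equiv.swap i k * Equiv.swap k j := by rw [Equiv.swap_inv]
      have hcomp : y ∘ (Equiv.swap i j)
          = ((y ∘ Equiv.swap k j) ∘ Equiv.swap i k) ∘ Equiv.swap k j := by
        rw [hdecomp]; funext t; simp [Equiv.Perm.mul_apply]
      rw [hcomp, hadj _ k j hkj, IH ((k:ℕ)-(i:ℕ)) (by omega) _ i k hik rfl,
        hadj _ k j hkj]
      ring

lemma swap01 {Q : (Fin (q+2) → C) → B} (hS : SwapNeg Q) (u v : C) (w : Fin q → C) :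
    Q (Fin.cons v (Fin.cons u w)) = - Q (Fin.cons u (Fin.cons v w)) := by
  have key : Fin.cons v (Fin.cons u w)
      = (Fin.cons u (Fin.cons v w)) ∘ (Equiv.swap (0 : Fin (q+2)) 1) := by
    funext t
    refine Fin.cases ?_ (fun t => ?_) t
    · rw [Function.comp_apply, Equiv.swap_apply_left, show (1 : Fin (q+2)) = (0 : Fin (q+1)).succ from
        (Fin.succ_zero_eq_one).symm]
      simp
    · refine Fin.cases ?_ (fun r => ?_) t
      · rw [Function.comp_apply, show ((0:Fin (q+1)).succ) = (1 : Fin (q+2)) from Fin.succ_zero_eq_one,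
          Equiv.swap_apply_right, Fin.cons_zero, ← Fin.succ_zero_eq_one, Fin.cons_succ, Fin.cons_zero]
      · rw [Function.comp_apply, Equiv.swap_apply_of_ne_of_ne (Fin.succ_ne_zero _)
          (by rw [← Fin.succ_zero_eq_one]; exact fun hh => Fin.succ_ne_zero r (Fin.succ_injective _ hh))]
        simp
  rw [key]
  exact hS _ 0 1 (by simp [Fin.ext_iff])

lemma update_zero_eq_cons (y : Fin (q+1) → C) (c : C) :
    update y 0 c = Fin.cons c (y ∘ Fin.succ) := by
  funext t
  refine Fin.cases ?_ (fun t => ?_) t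
  · simp
  · simp [Function.update_of_ne (Fin.succ_ne_zero t), Fin.cons_succ]

lemma move : ∀ {m : ℕ} (Q : (Fin (m+1) → C) → B), SwapNeg Q →
    ∀ (y : Fin (m+1) → C) (j : Fin (m+1)) (c : C),
      Q (Fin.cons c (y ∘ j.succAbove)) = (-1:B)^(j:ℕ) * Q (update y j c) := by
  intro m
  induction m with
  | zero =>
    intro Q hS y j c
    have hj : j = 0 := @Subsingleton.elim (Fin 1) _ j 0
    subst hj
    have hv : Fin.cons c (y ∘ (0 : Fin 1).succAbove) = update y 0 c := by
      funext t
      have ht : t = 0 := @Subsingleton.elim (Fin 1) _ t 0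
      subst ht; simp
    rw [hv]; simp
  | succ m IH =>
    intro Q hS y j c
    refine Fin.cases ?_ (fun k => ?_) j
    · rw [Fin.succAbove_zero, ← update_zero_eq_cons]; simp
    · rw [succAbove_comp_cons y k,
        swap01 hS (y 0) c ((y ∘ Fin.succ) ∘ k.succAbove)]
      have hS' : SwapNeg (contr (y 0) Q) := contr_swapNeg hS _
      have hI := IH (contr (y 0) Q) hS' (y ∘ Fin.succ) k c
      simp only [contr] at hI
      rw [hI, cons_update_succ, Fin.val_succ, npow_flip]
      ring

lemma comp_comp {X Y Z W : Type*} (f : Z → W) (g : Y → Z) (hh : X → Y) :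
    f ∘ (g ∘ hh) = (f ∘ g) ∘ hh := rfl

lemma dBr_eq_double (Q : (Fin (q+1) → C) → B) (y : Fin (q+2) → C) :
    dBr β Q y = ∑ i : Fin (q+2), ∑ j : Fin (q+1),
      if (i:ℕ) ≤ (j:ℕ) then (-1:B)^((i:ℕ)+(j:ℕ)+1) *
        Q (Fin.cons (β (y i) (y j.succ)) (y ∘ i.succAbove ∘ j.succAbove)) else 0 := by
  rw [dBr, Finset.sum_filter, ← Finset.univ_product_univ, Finset.sum_product]

lemma dAct_cons (Q : (Fin (q+1) → C) → B) (a : C) (y : Fin (q+1) → C) :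
    dAct ρ Q (Fin.cons a y) = ρ a (Q y) - dAct ρ (contr a Q) y := by
  simp only [dAct]
  rw [Fin.sum_univ_succ]
  have h0 : (-1:B)^(((0 : Fin (q+2))):ℕ) *
      ρ ((Fin.cons a y : Fin (q+2) → C) 0) (Q ((Fin.cons a y : Fin (q+2) → C) ∘ (0 : Fin (q+2)).succAbove)) = ρ a (Q y) := by
    rw [cons_comp_succAbove_zero]; simp
  rw [h0]
  have h1 : ∀ i : Fin (q+1), (-1:B)^(((i.succ : Fin (q+2))):ℕ) *
      ρ ((Fin.cons a y : Fin (q+2) → C) i.succ) (Q ((Fin.cons a y : Fin (q+2) → C) ∘ (i.succ).succAbove))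
      = -((-1:B)^((i:ℕ)) * ρ (y i) ((contr a Q) (y ∘ i.succAbove))) := by
    intro i
    rw [cons_comp_succAbove_succ, Fin.cons_succ, Fin.val_succ, npow_flip]
    simp only [contr]; ring
  rw [Finset.sum_congr rfl (fun i _ => h1 i), Finset.sum_neg_distrib]
  ring

lemma dBr_cons (Q : (Fin (q+2) → C) → B) (hS : SwapNeg Q) (a : C) (y : Fin (q+2) → C) :
    dBr β Q (Fin.cons a y)
      = - (∑ j : Fin (q+2), Q (update y j (β a (y j)))) - dBr β (contr a Q) y := by
  rw [dBr_eq_double, Fin.sum_univ_succ]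
  have h0 : ∀ j : Fin (q+2), (if (((0 : Fin (q+3))):ℕ) ≤ (j:ℕ) then
      (-1:B)^((((0 : Fin (q+3))):ℕ)+(j:ℕ)+1) *
        Q (Fin.cons (β ((Fin.cons a y : Fin (q+3) → C) (0 : Fin (q+3))) ((Fin.cons a y : Fin (q+3) → C) j.succ))
          ((Fin.cons a y : Fin (q+3) → C) ∘ ((0 : Fin (q+3)).succAbove ∘ j.succAbove))) else 0)
      = - Q (update y j (β a (y j))) := by
    intro j
    rw [if_pos (by simp)]
    rw [comp_comp, cons_comp_succAbove_zero, Fin.cons_zero, Fin.cons_succ]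
    rw [move Q hS y j (β a (y j))]
    rw [← mul_assoc, ← pow_add]
    simp only [Fin.val_zero]
    rw [Odd.neg_one_pow (by exact ⟨(j:ℕ), by omega⟩)]
    ring
  have h1 : ∀ (i : Fin (q+2)) (j : Fin (q+1)),
      (if (((i.succ : Fin (q+3))):ℕ) ≤ (((j.succ : Fin (q+2))):ℕ) then
        (-1:B)^((((i.succ : Fin (q+3))):ℕ)+(((j.succ : Fin (q+2))):ℕ)+1) *
          Q (Fin.cons (β ((Fin.cons a y : Fin (q+3) → C) i.succ) ((Fin.cons a y : Fin (q+3) → C) (j.succ).succ))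
            ((Fin.cons a y : Fin (q+3) → C) ∘ ((i.succ).succAbove ∘ (j.succ).succAbove))) else 0)
      = - (if (i:ℕ) ≤ (j:ℕ) then (-1:B)^((i:ℕ)+(j:ℕ)+1) *
          ((contr a Q) (Fin.cons (β (y i) (y j.succ)) (y ∘ i.succAbove ∘ j.succAbove))) else 0) := by
    intro i j
    by_cases hg : (i:ℕ) ≤ (j:ℕ)
    · rw [if_pos (by simp only [Fin.val_succ]; omega), if_pos hg]
      rw [comp_comp, cons_comp_succAbove_succ, cons_comp_succAbove_succ,
        Fin.cons_succ, Fin.cons_succ,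
        swap01 hS a (β (y i) (y j.succ)) ((y ∘ i.succAbove) ∘ j.succAbove)]
      simp only [contr, Fin.val_succ]
      rw [npow_congr (show ((i:ℕ)+1+((j:ℕ)+1)+1) % 2 = ((i:ℕ)+(j:ℕ)+1) % 2 from by omega)]
      rw [comp_comp]
      ring
    · rw [if_neg (by simp only [Fin.val_succ]; omega), if_neg hg, neg_zero]
  have h2 : ∀ i : Fin (q+2), (∑ j : Fin (q+2),
      if (((i.succ : Fin (q+3))):ℕ) ≤ (j:ℕ) then
        (-1:B)^((((i.succ : Fin (q+3))):ℕ)+(j:ℕ)+1) *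
          Q (Fin.cons (β ((Fin.cons a y : Fin (q+3) → C) i.succ) ((Fin.cons a y : Fin (q+3) → C) j.succ))
            ((Fin.cons a y : Fin (q+3) → C) ∘ ((i.succ).succAbove ∘ j.succAbove))) else 0)
      = - ∑ j : Fin (q+1), (if (i:ℕ) ≤ (j:ℕ) then (-1:B)^((i:ℕ)+(j:ℕ)+1) *
          ((contr a Q) (Fin.cons (β (y i) (y j.succ)) (y ∘ i.succAbove ∘ j.succAbove))) else 0) := by
    intro i
    rw [Fin.sum_univ_succ]
    rw [if_neg (by simp [Fin.val_succ])]
    rw [zero_add, Finset.sum_congr rfl (fun j _ => h1 i j), Finset.sum_neg_distrib]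
  rw [Finset.sum_congr rfl (fun j _ => h0 j), Finset.sum_neg_distrib,
    Finset.sum_congr rfl (fun i _ => h2 i), Finset.sum_neg_distrib, ← dBr_eq_double]
  ring

lemma cartan : ∀ {q : ℕ} (Q : (Fin (q+1) → C) → B), SwapNeg Q → ∀ (a : C) (y : Fin (q+1) → C),
    dd β ρ Q (Fin.cons a y) = lie β ρ a Q y - dd β ρ (contr a Q) y := by
  intro q
  match q with
  | 0 =>
    intro Q hS a y
    rw [dd_succ, dd_zero, dAct_cons, lie]
    have hz : dBr β Q (Fin.cons a y) = - ∑ i : Fin 1, Q (update y i (β a (y i))) := by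
      rw [dBr_eq_double]
      rw [Fin.sum_univ_two, Fin.sum_univ_one, Fin.sum_univ_one]
      rw [if_pos (by simp), if_neg (by simp)]
      have hv : (Fin.cons a y : Fin 2 → C) ∘ ((0 : Fin 2).succAbove ∘ (0 : Fin 1).succAbove)
          = y ∘ (0 : Fin 1).succAbove := by
        rw [comp_comp, cons_comp_succAbove_zero]
      rw [hv, Fin.cons_zero, Fin.cons_succ]
      rw [move Q hS y 0 (β a (y 0))]
      simp
    rw [hz]
    ring
  | (q+1) =>
    intro Q hS a y
    rw [dd_succ, dd_succ, dAct_cons, dBr_cons Q hS a y, lie]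
    ring

lemma AddC.upd_sub {Q : (Fin q → C) → B} (hA : AddC Q) (y : Fin q → C) (i : Fin q) (u v : C) :
    Q (update y i (u - v)) = Q (update y i u) - Q (update y i v) := by
  rw [sub_eq_add_neg, hA y i u (-v), hA.upd_neg]; ring

lemma contr_lie (T : (Fin (q+1) → C) → B) (b c : C) (y : Fin q → C) :
    lie β ρ b T (Fin.cons c y) = lie β ρ b (contr c T) y - T (Fin.cons (β b c) y) := by
  simp only [lie, contr]
  rw [Fin.sum_univ_succ]
  have h0 : update (Fin.cons c y : Fin (q+1) → C) 0
      (β b ((Fin.cons c y : Fin (q+1) → C) 0)) = Fin.cons (β b c) y := by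
    rw [Fin.cons_zero, Fin.update_cons_zero]
  have h1 : ∀ i : Fin q, update (Fin.cons c y : Fin (q+1) → C) i.succ
      (β b ((Fin.cons c y : Fin (q+1) → C) i.succ)) = Fin.cons c (update y i (β b (y i))) := by
    intro i; rw [Fin.cons_succ, ← Fin.cons_update]
  rw [h0, Finset.sum_congr rfl (fun i _ => by rw [h1 i])]
  ring

lemma sum_erase_swap (f : Fin q → Fin q → B) :
    ∑ i : Fin q, ∑ j ∈ Finset.univ.erase i, f i j
      = ∑ i : Fin q, ∑ j ∈ Finset.univ.erase i, f j i := by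
  have key : ∀ g : Fin q → Fin q → B, (∑ i : Fin q, ∑ j ∈ Finset.univ.erase i, g i j)
      = ∑ i : Fin q, ∑ j : Fin q, if j ≠ i then g i j else 0 := by
    intro g
    apply Finset.sum_congr rfl
    intro i _
    rw [← Finset.filter_ne', Finset.sum_filter]
  rw [key, key, Finset.sum_comm]
  apply Finset.sum_congr rfl; intro a _
  apply Finset.sum_congr rfl; intro b _
  rcases eq_or_ne a b with rfl | hab
  · simp
  · rw [if_pos hab, if_pos hab.symm]

lemma beta_jac' (h : CES β ρ) (b b' e : C) :
    β b' (β b e) = β b (β b' e) - β (β b b') e := by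
  have hj := h.bj b b' e
  rw [show β b' (β e b) = - β b' (β b e) from by rw [h.ba e b, beta_neg_right h],
      show β e (β b b') = - β (β b b') e from h.ba e (β b b')] at hj
  have hz : β b' (β b e) - (β b (β b' e) - β (β b b') e)
      = -(β b (β b' e) + -β b' (β b e) + -β (β b b') e) := by abel
  rw [hj, neg_zero] at hz
  exact sub_eq_zero.mp hz

lemma lie_lie (h : CES β ρ) {T : (Fin q → C) → B} (hA : AddC T) (b b' : C) (y : Fin q → C) :
    lie β ρ b (lie β ρ b' T) y - lie β ρ b' (lie β ρ b T) y = lie β ρ (β b b') T y := by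
  have expand : ∀ u v : C, lie β ρ u (lie β ρ v T) y
      = ρ u (ρ v (T y)) - ∑ j : Fin q, ρ u (T (update y j (β v (y j))))
        - ∑ i : Fin q, ρ v (T (update y i (β u (y i))))
        + (∑ i : Fin q, T (update y i (β v (β u (y i))))
          + ∑ i : Fin q, ∑ j ∈ Finset.univ.erase i,
              T (update (update y i (β u (y i))) j (β v (y j)))) := by
    intro u v
    simp only [lie]
    rw [rho_sub h, rho_sum h]
    have inner : ∀ i : Fin q, (∑ j : Fin q, T (update (update y i (β u (y i))) j
        (β v ((update y i (β u (y i))) j))))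
        = T (update y i (β v (β u (y i))))
          + ∑ j ∈ Finset.univ.erase i, T (update (update y i (β u (y i))) j (β v (y j))) := by
      intro i
      rw [← Finset.add_sum_erase _ _ (Finset.mem_univ i)]
      congr 1
      · rw [Function.update_self, Function.update_idem]
      · apply Finset.sum_congr rfl
        intro j hj
        rw [Function.update_of_ne (Finset.ne_of_mem_erase hj)]
    rw [Finset.sum_sub_distrib, Finset.sum_congr rfl (fun i _ => inner i),
      Finset.sum_add_distrib]
    ring
  rw [expand b b', expand b' b,
    sum_erase_swap (fun i j => T (update (update y i (β b (y i))) j (β b' (y j))))]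
  have hdc : (∑ i : Fin q, ∑ j ∈ Finset.univ.erase i,
      T (update (update y j (β b (y j))) i (β b' (y i))))
      = ∑ i : Fin q, ∑ j ∈ Finset.univ.erase i,
        T (update (update y i (β b' (y i))) j (β b (y j))) := by
    apply Finset.sum_congr rfl; intro i _
    apply Finset.sum_congr rfl; intro j hj
    rw [Function.update_comm (Finset.ne_of_mem_erase hj)]
  rw [hdc]
  simp only [lie]
  rw [h.act b b' (T y)]
  have hjac : ∀ i : Fin q, T (update y i (β b' (β b (y i))))
      = T (update y i (β b (β b' (y i)))) - T (update y i (β (β b b') (y i))) := by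
    intro i; rw [beta_jac' h, hA.upd_sub]
  rw [Finset.sum_congr rfl (fun i _ => hjac i), Finset.sum_sub_distrib]
  ring

lemma dAct_neg (h : CES β ρ) (T : (Fin q → C) → B) (y : Fin (q+1) → C) :
    dAct ρ (fun z => - T z) y = - dAct ρ T y := by
  simp only [dAct]
  rw [← Finset.sum_neg_distrib]
  apply Finset.sum_congr rfl; intro i _
  rw [rho_neg h]; ring

lemma dBr_neg (T : (Fin (q+1) → C) → B) (y : Fin (q+2) → C) :
    dBr β (fun z => - T z) y = - dBr β T y := by
  simp only [dBr]
  rw [← Finset.sum_neg_distrib]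
  apply Finset.sum_congr rfl; intro p _
  ring

lemma dd_neg (h : CES β ρ) : ∀ {q : ℕ} (T : (Fin q → C) → B) (y : Fin (q+1) → C),
    dd β ρ (fun z => - T z) y = - dd β ρ T y := by
  intro q
  match q with
  | 0 => intro T y; rw [dd_zero, dd_zero, dAct_neg h]
  | q+1 =>
    intro T y
    rw [dd_succ, dd_succ, dAct_neg h, dBr_neg]
    ring

lemma dAct_sub (h : CES β ρ) (T T' : (Fin q → C) → B) (y : Fin (q+1) → C) :
    dAct ρ (fun z => T z - T' z) y = dAct ρ T y - dAct ρ T' y := by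
  simp only [dAct]
  rw [← Finset.sum_sub_distrib]
  apply Finset.sum_congr rfl; intro i _
  rw [rho_sub h]; ring

lemma dBr_sub (T T' : (Fin (q+1) → C) → B) (y : Fin (q+2) → C) :
    dBr β (fun z => T z - T' z) y = dBr β T y - dBr β T' y := by
  simp only [dBr]
  rw [← Finset.sum_sub_distrib]
  apply Finset.sum_congr rfl; intro p _
  ring

lemma dd_sub (h : CES β ρ) : ∀ {q : ℕ} (T T' : (Fin q → C) → B) (y : Fin (q+1) → C),
    dd β ρ (fun z => T z - T' z) y = dd β ρ T y - dd β ρ T' y := by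
  intro q
  match q with
  | 0 => intro T T' y; rw [dd_zero, dd_zero, dd_zero, dAct_sub h]
  | q+1 =>
    intro T T' y
    rw [dd_succ, dd_succ, dd_succ, dAct_sub h, dBr_sub]
    ring

lemma cons_swap01 (u v : C) (w : Fin q → C) :
    (Fin.cons u (Fin.cons v w) : Fin (q+2) → C) ∘ (Equiv.swap (0 : Fin (q+2)) 1)
      = Fin.cons v (Fin.cons u w) := by
  funext t
  refine Fin.cases ?_ (fun t => ?_) t
  · rw [Function.comp_apply, Equiv.swap_apply_left, show (1 : Fin (q+2)) = (0 : Fin (q+1)).succ from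
      (Fin.succ_zero_eq_one).symm]
    simp
  · refine Fin.cases ?_ (fun r => ?_) t
    · rw [Function.comp_apply, show ((0:Fin (q+1)).succ) = (1 : Fin (q+2)) from Fin.succ_zero_eq_one,
        Equiv.swap_apply_right, Fin.cons_zero, ← Fin.succ_zero_eq_one, Fin.cons_succ, Fin.cons_zero]
    · rw [Function.comp_apply, Equiv.swap_apply_of_ne_of_ne (Fin.succ_ne_zero _)
        (by rw [← Fin.succ_zero_eq_one]; exact fun hh => Fin.succ_ne_zero r (Fin.succ_injective _ hh))]
      simp

lemma dAct_single (R : (Fin 0 → C) → B) (z : Fin 1 → C) :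
    dAct ρ R z = ρ (z 0) (R (z ∘ (0:Fin 1).succAbove)) := by
  simp only [dAct]
  rw [Fin.sum_univ_one]
  simp

lemma dd_swap01 (h : CES β ρ) : ∀ {q : ℕ} (Q : (Fin (q+1) → C) → B), AddC Q → SwapNeg Q →
    ∀ (u v : C) (w : Fin q → C),
    dd β ρ Q (Fin.cons v (Fin.cons u w)) = - dd β ρ Q (Fin.cons u (Fin.cons v w)) := by
  intro q
  match q with
  | 0 =>
    intro Q hA hS u v w
    rw [cartan Q hS v (Fin.cons u w), cartan Q hS u (Fin.cons v w),
      contr_lie Q v u w, contr_lie Q u v w]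
    rw [dd_zero, dd_zero, dAct_single, dAct_single]
    have hw1 : ((Fin.cons u w : Fin 1 → C) ∘ (0:Fin 1).succAbove) = w := funext fun t => t.elim0
    have hw2 : ((Fin.cons v w : Fin 1 → C) ∘ (0:Fin 1).succAbove) = w := funext fun t => t.elim0
    rw [hw1, hw2, Fin.cons_zero, Fin.cons_zero]
    simp only [lie, contr, Finset.univ_eq_empty, Finset.sum_empty]
    have hbm : Q (Fin.cons (β v u) w) = - Q (Fin.cons (β u v) w) := by
      rw [h.ba v u, hA.cons_neg]
    rw [hbm]
    ring
  | q+1 =>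
    intro Q hA hS u v w
    rw [cartan Q hS v (Fin.cons u w), cartan Q hS u (Fin.cons v w)]
    rw [contr_lie Q v u w, contr_lie Q u v w]
    rw [cartan (contr v Q) (contr_swapNeg hS v) u w, cartan (contr u Q) (contr_swapNeg hS u) v w]
    have hcc : contr u (contr v Q) = fun z => - contr v (contr u Q) z := by
      funext z; simp only [contr]; exact swap01 hS u v z
    rw [hcc, dd_neg h]
    have hbm : Q (Fin.cons (β v u) w) = - Q (Fin.cons (β u v) w) := by
      rw [h.ba v u, hA.cons_neg]
    rw [hbm]
    ring

lemma dd_swap_zero_one (h : CES β ρ) {q : ℕ} (Q : (Fin (q+1) → C) → B) (hA : AddC Q)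
    (hS : SwapNeg Q) (y : Fin (q+2) → C) :
    dd β ρ Q (y ∘ Equiv.swap (0 : Fin (q+2)) 1) = - dd β ρ Q y := by
  have hy : Fin.cons (y 0) (Fin.cons (y 1) (Fin.tail (Fin.tail y))) = y := by
    funext t
    refine Fin.cases ?_ (fun r => ?_) t
    · simp
    · refine Fin.cases ?_ (fun r2 => ?_) r
      · rw [Fin.cons_succ, Fin.cons_zero, Fin.succ_zero_eq_one]
      · rw [Fin.cons_succ, Fin.cons_succ]; rfl
  rw [← hy, cons_swap01]
  exact dd_swap01 h Q hA hS (y 0) (y 1) (Fin.tail (Fin.tail y))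

lemma swapNeg_dd (h : CES β ρ) : ∀ {q : ℕ} (Q : (Fin (q+1) → C) → B), AddC Q → SwapNeg Q →
    SwapNeg (dd β ρ Q) := by
  intro q
  induction q with
  | zero =>
    intro Q hA hS
    apply swapNeg_of_adj
    intro y i j hji
    have hiv := i.isLt
    have hjv := j.isLt
    have hi : i = 0 := by apply Fin.ext; simp only [Fin.val_zero]; omega
    have hjj : j = 1 := by apply Fin.ext; simp only [Fin.val_one]; omega
    subst hi; subst hjj
    exact dd_swap_zero_one h Q hA hS y
  | succ q IH =>
    intro Q hA hS
    apply swapNeg_of_adj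
    intro y i j hji
    rcases eq_or_ne i 0 with rfl | hi0
    · have hjj : j = 1 := by apply Fin.ext; simp only [Fin.val_one]; simp only [Fin.val_zero] at hji; omega
      subst hjj
      exact dd_swap_zero_one h Q hA hS y
    · obtain ⟨r, rfl⟩ := Fin.eq_succ_of_ne_zero hi0
      have hj0 : j ≠ 0 := by
        intro hh; subst hh; simp [Fin.val_succ] at hji
      obtain ⟨r', rfl⟩ := Fin.eq_succ_of_ne_zero hj0
      have hvv : (r':ℕ) = (r:ℕ)+1 := by simpa [Fin.val_succ] using hji
      have hrr : r ≠ r' := fun hh => by rw [hh] at hvv; omega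
      have hkey : ∀ (u : C) (z : Fin (q+2) → C),
          dd β ρ Q ((Fin.cons u z) ∘ Equiv.swap r.succ r'.succ) = - dd β ρ Q (Fin.cons u z) := by
        intro u z
        rw [cons_comp_swap, cartan Q hS u (z ∘ Equiv.swap r r'), cartan Q hS u z,
          lie_swapNeg h hS u z r r' hrr,
          IH (contr u Q) (contr_addC hA u) (contr_swapNeg hS u) z r r' hrr]
        ring
      calc dd β ρ Q (y ∘ Equiv.swap r.succ r'.succ)
          = dd β ρ Q ((Fin.cons (y 0) (Fin.tail y)) ∘ Equiv.swap r.succ r'.succ) := by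
            rw [Fin.cons_self_tail]
        _ = - dd β ρ Q (Fin.cons (y 0) (Fin.tail y)) := hkey _ _
        _ = - dd β ρ Q y := by rw [Fin.cons_self_tail]

lemma lie_sub (h : CES β ρ) (T T' : (Fin q → C) → B) (b : C) (y : Fin q → C) :
    lie β ρ b (fun z => T z - T' z) y = lie β ρ b T y - lie β ρ b T' y := by
  simp only [lie]
  rw [rho_sub h, Finset.sum_sub_distrib]
  ring

lemma lie_dd (h : CES β ρ) : ∀ {q : ℕ} (Q : (Fin q → C) → B), AddC Q → SwapNeg Q →
    ∀ (b : C) (y : Fin (q+1) → C), lie β ρ b (dd β ρ Q) y = dd β ρ (lie β ρ b Q) y := by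
  intro q
  induction q with
  | zero =>
    intro Q hA hS b y
    have huniq : ∀ f g : Fin 0 → C, f = g := fun f g => funext fun t => t.elim0
    have hQ : ∀ f : Fin 0 → C, Q f = Q (y ∘ (0 : Fin 1).succAbove) := fun f => by
      rw [huniq f (y ∘ (0 : Fin 1).succAbove)]
    rw [dd_zero, dd_zero]
    simp only [lie, dAct_single, Finset.univ_eq_empty, Finset.sum_empty, Fin.sum_univ_succ,
      Fin.sum_univ_zero, Function.update_self, sub_zero, add_zero, hQ]
    rw [h.act b (y 0) (Q (y ∘ (0:Fin 1).succAbove))]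
    ring
  | succ q IH =>
    intro Q hA hS b y
    have key : ∀ (c : C) (z : Fin (q+1) → C),
        lie β ρ b (dd β ρ Q) (Fin.cons c z) = dd β ρ (lie β ρ b Q) (Fin.cons c z) := by
      intro c z
      rw [contr_lie (dd β ρ Q) b c z, cartan Q hS (β b c) z]
      have hc1 : contr c (dd β ρ Q) = fun z' => lie β ρ c Q z' - dd β ρ (contr c Q) z' := by
        funext z'; simp only [contr]; exact cartan Q hS c z'
      rw [hc1]
      have hc2 : lie β ρ b (fun z' => lie β ρ c Q z' - dd β ρ (contr c Q) z') z
          = lie β ρ b (lie β ρ c Q) z - lie β ρ b (dd β ρ (contr c Q)) z :=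
        lie_sub h _ _ b z
      rw [hc2, IH (contr c Q) (contr_addC hA c) (contr_swapNeg hS c) b z]
      rw [cartan (lie β ρ b Q) (lie_swapNeg h hS b) c z]
      have hc3 : contr c (lie β ρ b Q) = fun z' => lie β ρ b (contr c Q) z' - Q (Fin.cons (β b c) z') := by
        funext z'; simp only [contr]; exact contr_lie Q b c z'
      rw [hc3]
      have hc4 : dd β ρ (fun z' => lie β ρ b (contr c Q) z' - Q (Fin.cons (β b c) z')) z
          = dd β ρ (lie β ρ b (contr c Q)) z - dd β ρ (contr (β b c) Q) z :=
        dd_sub h (lie β ρ b (contr c Q)) (contr (β b c) Q) z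
      rw [hc4]
      have hll := lie_lie h hA b c z
      linear_combination hll
    calc lie β ρ b (dd β ρ Q) y
        = lie β ρ b (dd β ρ Q) (Fin.cons (y 0) (Fin.tail y)) := by rw [Fin.cons_self_tail]
      _ = dd β ρ (lie β ρ b Q) (Fin.cons (y 0) (Fin.tail y)) := key _ _
      _ = dd β ρ (lie β ρ b Q) y := by rw [Fin.cons_self_tail]

theorem dd_dd (h : CES β ρ) : ∀ {q : ℕ} (Q : (Fin q → C) → B), AddC Q → SwapNeg Q →
    ∀ y : Fin (q+2) → C, dd β ρ (dd β ρ Q) y = 0 := by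
  intro q
  induction q with
  | zero =>
    intro Q hA hS y
    have huniq : ∀ f g : Fin 0 → C, f = g := fun f g => funext fun t => t.elim0
    set e : Fin 0 → C := fun t => t.elim0 with he
    have hsa0 : (0 : Fin 2).succAbove 0 = 1 := by apply Fin.ext; rw [valsa]; simp
    have hsa1 : (1 : Fin 2).succAbove 0 = 0 := by apply Fin.ext; rw [valsa]; simp
    rw [dd_succ, dd_zero]
    have hQ : ∀ f : Fin 0 → C, Q f = Q e := fun f => by rw [huniq f e]
    have hdact : dAct ρ (dAct ρ Q) y = ρ (y 0) (ρ (y 1) (Q e)) - ρ (y 1) (ρ (y 0) (Q e)) := by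
      simp only [dAct, Fin.sum_univ_succ, Fin.sum_univ_zero, hQ, Function.comp_apply,
        Fin.succ_zero_eq_one, hsa0, hsa1, Fin.val_zero, Fin.val_one, pow_zero, pow_one,
        add_zero, one_mul, neg_one_mul]
      ring
    have hdbr : dBr β (dAct ρ Q) y = - ρ (β (y 0) (y 1)) (Q e) := by
      rw [dBr_eq_double]
      simp only [Fin.sum_univ_succ, Fin.sum_univ_zero, Fin.succ_zero_eq_one, Fin.val_zero,
        Fin.val_one, add_zero]
      rw [if_pos (by norm_num), if_neg (by norm_num)]
      rw [dAct_single, Fin.cons_zero]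
      simp only [hQ]
      norm_num
    rw [hdact, hdbr, h.act (y 0) (y 1) (Q e)]
    ring
  | succ q IH =>
    intro Q hA hS y
    have key : ∀ (c : C) (z : Fin (q+2) → C), dd β ρ (dd β ρ Q) (Fin.cons c z) = 0 := by
      intro c z
      rw [cartan (dd β ρ Q) (swapNeg_dd h Q hA hS) c z]
      have hc1 : contr c (dd β ρ Q) = fun z' => lie β ρ c Q z' - dd β ρ (contr c Q) z' := by
        funext z'; simp only [contr]; exact cartan Q hS c z'
      rw [hc1]
      have hc2 : dd β ρ (fun z' => lie β ρ c Q z' - dd β ρ (contr c Q) z') z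
          = dd β ρ (lie β ρ c Q) z - dd β ρ (dd β ρ (contr c Q)) z := dd_sub h _ _ z
      rw [hc2, IH (contr c Q) (contr_addC hA c) (contr_swapNeg hS c) z,
        ← lie_dd h Q hA hS c z]
      ring
    calc dd β ρ (dd β ρ Q) y
        = dd β ρ (dd β ρ Q) (Fin.cons (y 0) (Fin.tail y)) := by rw [Fin.cons_self_tail]
      _ = 0 := key _ _

lemma dd_scal (h : CES β ρ) (k : ℕ) (T : (Fin q → C) → B) (y : Fin (q+1) → C) :
    dd β ρ (fun z => (-1:B)^k * T z) y = (-1:B)^k * dd β ρ T y := by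
  rcases Nat.even_or_odd k with hk | hk
  · simp only [hk.neg_one_pow, one_mul]
  · simp only [hk.neg_one_pow, neg_one_mul]; exact dd_neg h T y

end PoissonCE




/-!
STATEMENT 0.  The complex `Hom_C(Ω_{C/k},B) → Hom_C(∧²Ω_{C/k},B) → ⋯` associated with a
Poisson homomorphism `f : (C,Π) → (B,Λ)`.  An element of `Hom_C(∧^n Ω_{C/k}, B)` is
modelled as an alternating `k`-multilinear map `C^n → B` which is a derivation (over `f`)
in each argument.  The differential `π` is defined by the shuffle formula of the paper,
and the statement asserts `π ∘ π = 0`.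
-/

/-- A Poisson bracket on a commutative algebra `R` over a base commutative ring `R₀`:
an antisymmetric biderivation satisfying the Jacobi identity. -/
structure PoissonBracket (R₀ R : Type*) [CommRing R₀] [CommRing R] [Algebra R₀ R] where
  br : R → R → R
  add_left : ∀ a b c, br (a + b) c = br a c + br b c
  smul_left : ∀ (r : R₀) (a b : R), br (r • a) b = r • br a b
  antisymm : ∀ a b, br a b = - br b a
  leibniz : ∀ a b c, br a (b * c) = br a b * c + b * br a c
  jacobi : ∀ a b c, br a (br b c) + br b (br c a) + br c (br a b) = 0

variable {k B C : Type*} [Field k] [CommRing B] [CommRing C] [Algebra k B] [Algebra k C]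

/-- `Q ∈ Hom_C(∧^n Ω_{C/k}, B)`: an alternating `k`-multilinear map `C^n → B` which is a
derivation over `f` in each argument. -/
def IsPolyDeriv (f : C →ₐ[k] B) {n : ℕ} (Q : (Fin n → C) → B) : Prop :=
  (∀ (x : Fin n → C) (i : Fin n) (a b : C),
      Q (Function.update x i (a + b)) = Q (Function.update x i a) + Q (Function.update x i b)) ∧
  (∀ (x : Fin n → C) (i : Fin n) (r : k) (a : C),
      Q (Function.update x i (r • a)) = r • Q (Function.update x i a)) ∧
  (∀ (x : Fin n → C) (i : Fin n) (a b : C),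
      Q (Function.update x i (a * b)) =
        f a * Q (Function.update x i b) + f b * Q (Function.update x i a)) ∧
  (∀ (x : Fin n → C) (i j : Fin n), i ≠ j → x i = x j → Q x = 0)

/-- The differential
`π(Q)(a_1,…,a_{q+1}) = Σ_{σ ∈ S_{q,1}} sgn(σ) Λ(Q(a_{σ(1)},…,a_{σ(q)}), f(a_{σ(q+1)}))
  − (−1)^{q−1} Σ_{σ ∈ S_{2,q−1}} sgn(σ) Q(Π(a_{σ(1)},a_{σ(2)}), a_{σ(3)},…,a_{σ(q+1)})`
written out over `Fin`-indexed arguments (here `q = n+1`). -/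
def piDiff (L : PoissonBracket k B) (P : PoissonBracket k C) (f : C →ₐ[k] B)
    {n : ℕ} (Q : (Fin (n + 1) → C) → B) : (Fin (n + 2) → C) → B := fun x =>
  (∑ i : Fin (n + 2), (-1 : B) ^ (n + 1 - (i : ℕ)) * L.br (Q (x ∘ i.succAbove)) (f (x i)))
    + (-1 : B) ^ (n + 1) *
      ∑ i : Fin (n + 2), ∑ j : Fin (n + 1),
        if (i : ℕ) < ((i.succAbove j : Fin (n + 2)) : ℕ) then
          (-1 : B) ^ ((i : ℕ) + ((i.succAbove j : Fin (n + 2)) : ℕ) + 1) *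
            Q (Fin.cons (P.br (x i) (x (i.succAbove j))) (x ∘ i.succAbove ∘ j.succAbove))
        else 0


section Bridge

lemma pb_add_right {R₀ R : Type*} [CommRing R₀] [CommRing R] [Algebra R₀ R]
    (L : PoissonBracket R₀ R) (a b c : R) : L.br a (b + c) = L.br a b + L.br a c := by
  rw [L.antisymm a (b+c), L.add_left, L.antisymm b a, L.antisymm c a]; ring

lemma pb_neg_right {R₀ R : Type*} [CommRing R₀] [CommRing R] [Algebra R₀ R]
    (L : PoissonBracket R₀ R) (a b : R) : L.br a (-b) = - L.br a b := by
  have h0 : L.br a 0 = 0 := by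
    have := pb_add_right L a 0 0; simp at this; exact this
  have := pb_add_right L a b (-b); simp [h0] at this
  linear_combination -this

lemma mkCES (L : PoissonBracket k B) (P : PoissonBracket k C) (f : C →ₐ[k] B)
    (hf : ∀ a b, f (P.br a b) = L.br (f a) (f b)) :
    PoissonCE.CES (B := B) (C := C) P.br (fun a m => L.br (f a) m) where
  rho_add a m m' := pb_add_right L (f a) m m'
  act a b m := by
    show L.br (f (P.br a b)) m = _
    rw [hf]
    have hj := L.jacobi (f a) (f b) m
    rw [show L.br m (f a) = - L.br (f a) m from L.antisymm _ _,
        pb_neg_right L (f b) (L.br (f a) m),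
        show L.br m (L.br (f a) (f b)) = - L.br (L.br (f a) (f b)) m from L.antisymm _ _] at hj
    linear_combination -hj
  bl := P.add_left
  brr a b c := pb_add_right P a b c
  ba := P.antisymm
  bj := P.jacobi

lemma piDiff_eq (L : PoissonBracket k B) (P : PoissonBracket k C) (f : C →ₐ[k] B)
    {n : ℕ} (Q : (Fin (n + 1) → C) → B) (y : Fin (n + 2) → C) :
    piDiff L P f Q y = (-1:B)^n * PoissonCE.dd P.br (fun a m => L.br (f a) m) Q y := by
  simp only [piDiff]
  rw [PoissonCE.dd_succ, mul_add]
  congr 1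
  · simp only [PoissonCE.dAct]
    rw [Finset.mul_sum]
    apply Finset.sum_congr rfl
    intro i _
    have hle : (i:ℕ) ≤ n+1 := Nat.lt_succ_iff.mp i.isLt
    rw [L.antisymm (Q (y ∘ i.succAbove)) (f (y i)), PoissonCE.npow_sub hle]
    rw [PoissonCE.npow_congr (show ((n+1)+(i:ℕ)) % 2 = ((n+(i:ℕ))+1) % 2 from by omega),
      PoissonCE.npow_flip, pow_add]
    ring
  · rw [PoissonCE.dBr_eq_double]
    have hterm : ∀ (i : Fin (n+2)) (j : Fin (n+1)),
        (if (i : ℕ) < ((i.succAbove j : Fin (n + 2)) : ℕ) then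
          (-1 : B) ^ ((i : ℕ) + ((i.succAbove j : Fin (n + 2)) : ℕ) + 1) *
            Q (Fin.cons (P.br (y i) (y (i.succAbove j))) (y ∘ i.succAbove ∘ j.succAbove))
        else 0)
        = - (if (i:ℕ) ≤ (j:ℕ) then (-1:B)^((i:ℕ)+(j:ℕ)+1) *
            Q (Fin.cons (P.br (y i) (y j.succ)) (y ∘ i.succAbove ∘ j.succAbove)) else 0) := by
      intro i j
      by_cases hg : (i:ℕ) ≤ (j:ℕ)
      · have hsa : i.succAbove j = j.succ := by
          apply Fin.ext; rw [PoissonCE.valsa, Fin.val_succ, if_neg (by omega)]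
        rw [hsa, if_pos (by rw [Fin.val_succ]; omega), if_pos hg, Fin.val_succ]
        rw [PoissonCE.npow_congr (B := B)
          (show ((i:ℕ)+((j:ℕ)+1)+1) % 2 = (((i:ℕ)+(j:ℕ)+1)+1) % 2 from by omega),
          PoissonCE.npow_flip]
        ring
      · have hsa2 : ¬ ((i:ℕ) < ((i.succAbove j : Fin (n+2)) : ℕ)) := by
          rw [PoissonCE.valsa, if_pos (by omega)]; omega
        rw [if_neg hsa2, if_neg hg, neg_zero]
    rw [Finset.sum_congr rfl (fun i _ => Finset.sum_congr rfl (fun j _ => hterm i j))]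
    rw [Finset.sum_congr rfl (fun i (_ : i ∈ Finset.univ) => Finset.sum_neg_distrib _),
      Finset.sum_neg_distrib, PoissonCE.npow_flip]
    ring

end Bridge

/-- `π ∘ π = 0`, i.e. the sequence
`Hom_C(Ω_{C/k},B) → Hom_C(∧²Ω_{C/k},B) → Hom_C(∧³Ω_{C/k},B) → ⋯` is a complex. -/
theorem piDiff_comp_piDiff_eq_zero
    (L : PoissonBracket k B) (P : PoissonBracket k C) (f : C →ₐ[k] B)
    (hf : ∀ a b, f (P.br a b) = L.br (f a) (f b))
    {n : ℕ} (Q : (Fin (n + 1) → C) → B) (hQ : IsPolyDeriv f Q) :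
    piDiff L P f (piDiff L P f Q) = 0 := by
  classical
  have h : PoissonCE.CES (B := B) (C := C) P.br (fun a m => L.br (f a) m) :=
    mkCES L P f hf
  have hA : PoissonCE.AddC Q := hQ.1
  have hS : PoissonCE.SwapNeg Q := PoissonCE.swapNeg_of_alt hQ.1 hQ.2.2.2
  funext y
  rw [piDiff_eq L P f (piDiff L P f Q) y]
  have h1 : piDiff L P f Q = fun z => (-1:B)^n * PoissonCE.dd P.br (fun a m => L.br (f a) m) Q z :=
    funext fun z => piDiff_eq L P f Q z
  rw [h1, PoissonCE.dd_scal h n _ y, PoissonCE.dd_dd h Q hA hS y]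
  simp
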